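/- Let η̃ ∈ (0,1), γ ∈ (0,1), and integers n ≥ 4 and T with n−1 ≤ T ≤ 2 + (n−3)γ/η̃. Then the binomial tail term satisfies η̃·(T−n+2)²·B(T−2, n−3, η̃) ≤ ((n−3)²γ²/η̃)·exp(−2(η̃/γ − η̃)²(n−3)), where B(m, k, p) = C(m,k)·p^k·(1−p)^{m−k}. -/

import Mathlib

/-- The binomial probability mass function `B(m,k,p) = C(m,k)·p^k·(1−p)^{m−k}`. -/
noncomputable def binomPMF (m k : ℕ) (p : ℝ) : ℝ :=
  (m.choose k : ℝ) * p ^ k * (1 - p) ^ (m - k)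

/-- Hoeffding's lemma for a Bernoulli variable: the mgf bound. -/
lemma bernoulli_mgf_bound (p : ℝ) (hp0 : 0 < p) (hp1 : p < 1) (L : ℝ) (hL : 0 ≤ L) :
    1 - p + p * Real.exp L ≤ Real.exp (p * L + L ^ 2 / 8) := by
  set D : ℝ → ℝ := fun x => 1 - p + p * Real.exp x with hD_def
  have hDpos : ∀ x, 0 < D x := by
    intro x
    have := Real.exp_pos x
    have : 0 < p * Real.exp x := mul_pos hp0 this
    simp only [hD_def]
    linarith
  set h : ℝ → ℝ := fun x => p * Real.exp x / D x with hh_def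
  have hD' : ∀ x, HasDerivAt D (p * Real.exp x) x := fun x =>
    ((Real.hasDerivAt_exp x).const_mul p).const_add (1 - p)
  have hh' : ∀ x, HasDerivAt h (h x * (1 - h x)) x := by
    intro x
    have hne : D x ≠ 0 := (hDpos x).ne'
    have := ((Real.hasDerivAt_exp x).const_mul p).div (hD' x) hne
    refine this.congr_deriv ?_
    symm
    simp only [hh_def, hD_def]
    have hne' : 1 - p + p * Real.exp x ≠ 0 := hne
    field_simp
  have h01 : ∀ x, 0 < h x ∧ h x < 1 := by
    intro x
    constructor
    · exact div_pos (mul_pos hp0 (Real.exp_pos x)) (hDpos x)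
    · rw [hh_def]
      simp only
      rw [div_lt_one (hDpos x)]
      simp only [hD_def]
      linarith
  have hder_bound : ∀ x, ‖h x * (1 - h x)‖ ≤ 1 / 4 := by
    intro x
    obtain ⟨a, b⟩ := h01 x
    rw [Real.norm_eq_abs, abs_of_nonneg (by nlinarith)]
    nlinarith [sq_nonneg (h x - 1 / 2)]
  have hlip : ∀ x ∈ Set.Ici (0 : ℝ), h x ≤ p + x / 4 := by
    intro x hx
    have key := Convex.norm_image_sub_le_of_norm_hasDerivWithin_le
      (f := h) (f' := fun y => h y * (1 - h y)) (C := 1 / 4) (s := Set.Ici (0 : ℝ))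
      (fun y _ => (hh' y).hasDerivWithinAt) (fun y _ => hder_bound y)
      (convex_Ici 0) Set.self_mem_Ici hx
    have h0 : h 0 = p := by
      simp [hh_def, hD_def]
    rw [h0] at key
    have hx' : (0 : ℝ) ≤ x := hx
    rw [Real.norm_eq_abs, Real.norm_eq_abs, sub_zero, abs_of_nonneg hx'] at key
    have := (abs_le.mp key).2
    linarith
  set f : ℝ → ℝ := fun x => p * x + x ^ 2 / 8 - Real.log (D x) with hf_def
  have hf' : ∀ x, HasDerivAt f (p + x / 4 - h x) x := by
    intro x
    have h1 : HasDerivAt (fun y : ℝ => p * y) p x := by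
      simpa using (hasDerivAt_id x).const_mul p
    have h2 : HasDerivAt (fun y : ℝ => y ^ 2 / 8) (x / 4) x := by
      have := (hasDerivAt_pow 2 x).div_const 8
      refine this.congr_deriv ?_
      ring
    have h3 : HasDerivAt (fun y => Real.log (D y)) (h x) x := by
      have := (hD' x).log (hDpos x).ne'
      convert this using 1
    exact (h1.add h2).sub h3
  have hmono : MonotoneOn f (Set.Ici (0 : ℝ)) := by
    apply monotoneOn_of_deriv_nonneg (convex_Ici 0)
    · exact fun x _ => ((hf' x).differentiableAt.continuousAt).continuousWithinAt
    · intro x _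
      exact (hf' x).differentiableAt.differentiableWithinAt
    · intro x hx
      rw [(hf' x).deriv]
      rw [interior_Ici] at hx
      have := hlip x (Set.mem_Ici.mpr (le_of_lt hx))
      linarith
  have h0f : f 0 = 0 := by
    simp [hf_def, hD_def]
  have hfl := hmono Set.self_mem_Ici (Set.mem_Ici.mpr hL) hL
  rw [h0f] at hfl
  have hlog : Real.log (D L) ≤ p * L + L ^ 2 / 8 := by
    simp only [hf_def] at hfl
    linarith
  calc 1 - p + p * Real.exp L = D L := rfl
    _ = Real.exp (Real.log (D L)) := (Real.exp_log (hDpos L)).symm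
    _ ≤ Real.exp (p * L + L ^ 2 / 8) := Real.exp_le_exp.mpr hlog

/-- Chernoff–Hoeffding bound for a single binomial pmf term. -/
lemma binomPMF_le_exp (m k : ℕ) (hk : k ≤ m) (hm : 0 < m) (p : ℝ) (hp0 : 0 < p) (hp1 : p < 1)
    (hkp : (m : ℝ) * p ≤ k) :
    binomPMF m k p ≤ Real.exp (-2 * ((k : ℝ) - m * p) ^ 2 / m) := by
  have hmR : (0 : ℝ) < m := by exact_mod_cast hm
  set L : ℝ := 4 * ((k : ℝ) - m * p) / m with hL_def
  have hL : 0 ≤ L := by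
    apply div_nonneg _ hmR.le
    linarith
  have hp1' : (0 : ℝ) ≤ 1 - p := by linarith
  have hbase : (0 : ℝ) ≤ p * Real.exp L := by positivity
  have term_le : (p * Real.exp L) ^ k * (1 - p) ^ (m - k) * (m.choose k : ℝ)
      ≤ (p * Real.exp L + (1 - p)) ^ m := by
    rw [add_pow]
    apply Finset.single_le_sum (f := fun i => (p * Real.exp L) ^ i * (1 - p) ^ (m - i) * (m.choose i : ℝ))
    · intro i _
      exact mul_nonneg (mul_nonneg (pow_nonneg hbase i) (pow_nonneg hp1' _)) (Nat.cast_nonneg _)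
    · simp [Nat.lt_succ_iff, hk]
  have mgf : p * Real.exp L + (1 - p) ≤ Real.exp (p * L + L ^ 2 / 8) := by
    have := bernoulli_mgf_bound p hp0 hp1 L hL
    linarith
  have pow_le : (p * Real.exp L + (1 - p)) ^ m ≤ Real.exp ((m : ℝ) * (p * L + L ^ 2 / 8)) := by
    rw [Real.exp_nat_mul]
    exact pow_le_pow_left₀ (by linarith) mgf m
  have e1 : (Real.exp L) ^ k = Real.exp ((k : ℝ) * L) := (Real.exp_nat_mul L k).symm
  have e2 : Real.exp (-(L * (k : ℝ))) * Real.exp ((k : ℝ) * L) = 1 := by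
    rw [← Real.exp_add, show -(L * (k : ℝ)) + (k : ℝ) * L = 0 by ring, Real.exp_zero]
  have expand : binomPMF m k p
      = Real.exp (-(L * (k : ℝ))) * ((p * Real.exp L) ^ k * (1 - p) ^ (m - k) * (m.choose k : ℝ)) := by
    have : Real.exp (-(L * (k : ℝ))) * ((p * Real.exp L) ^ k * (1 - p) ^ (m - k) * (m.choose k : ℝ))
        = (Real.exp (-(L * (k : ℝ))) * Real.exp ((k : ℝ) * L))
          * ((m.choose k : ℝ) * p ^ k * (1 - p) ^ (m - k)) := by
      rw [mul_pow, e1]; ring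
    rw [this, e2, one_mul]
    rfl
  have step : binomPMF m k p ≤ Real.exp (-(L * (k : ℝ)) + (m : ℝ) * (p * L + L ^ 2 / 8)) := by
    rw [expand, Real.exp_add]
    apply mul_le_mul_of_nonneg_left _ (Real.exp_pos _).le
    exact le_trans term_le pow_le
  have hexp_eq : -(L * (k : ℝ)) + (m : ℝ) * (p * L + L ^ 2 / 8)
      = -2 * ((k : ℝ) - m * p) ^ 2 / m := by
    rw [hL_def]
    field_simp
    ring
  rwa [hexp_eq] at step

set_option maxHeartbeats 1600000 in
/-- **Chernoff–Hoeffding bound on the binomial tail term.** For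
`η̃, γ ∈ (0,1)`, `n ≥ 4`, and `n−1 ≤ T ≤ 2 + (n−3)γ/η̃`,
`η̃·(T−n+2)²·B(T−2, n−3, η̃) ≤ ((n−3)²γ²/η̃)·exp(−2(η̃/γ − η̃)²(n−3))`. -/
theorem binomial_tail_chernoff
    (η γ : ℝ) (hη : η ∈ Set.Ioo (0 : ℝ) 1) (hγ : γ ∈ Set.Ioo (0 : ℝ) 1)
    (n T : ℕ) (hn : 4 ≤ n) (hT1 : n - 1 ≤ T)
    (hT2 : (T : ℝ) ≤ 2 + ((n : ℝ) - 3) * γ / η) :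
    η * ((T : ℝ) - (n : ℝ) + 2) ^ 2 * binomPMF (T - 2) (n - 3) η ≤
      (((n : ℝ) - 3) ^ 2 * γ ^ 2 / η) *
        Real.exp (-2 * (η / γ - η) ^ 2 * ((n : ℝ) - 3)) := by
  obtain ⟨hη0, hη1⟩ := hη
  obtain ⟨hγ0, hγ1⟩ := hγ
  -- basic natural number facts
  have hTn : n - 1 ≤ T := hT1
  have hT3 : 3 ≤ T := by omega
  have hnR : (4 : ℝ) ≤ n := by exact_mod_cast hn
  have hTR : (n : ℝ) - 1 ≤ T := by
    have : n - 1 ≤ T := hT1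
    have : (n : ℝ) ≤ T + 1 := by exact_mod_cast (by omega : n ≤ T + 1)
    linarith
  have hmcast : ((T - 2 : ℕ) : ℝ) = (T : ℝ) - 2 := by
    have : 2 ≤ T := by omega
    push_cast [this]
    ring
  have hkcast : ((n - 3 : ℕ) : ℝ) = (n : ℝ) - 3 := by
    have : 3 ≤ n := by omega
    push_cast [this]
    ring
  have hkm : n - 3 ≤ T - 2 := by omega
  have hmpos : 0 < T - 2 := by omega
  have hkpos : (1 : ℝ) ≤ (n : ℝ) - 3 := by linarith
  -- derive η ≤ γ
  have hηγ : η ≤ γ := by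
    have h1 : (n : ℝ) - 3 ≤ ((n : ℝ) - 3) * γ / η := by linarith
    have h2 := mul_le_mul_of_nonneg_right h1 hη0.le
    rw [div_mul_cancel₀ _ hη0.ne'] at h2
    nlinarith
  -- mean condition : (T-2) * η ≤ n - 3
  have hmean : ((T : ℝ) - 2) * η ≤ (n : ℝ) - 3 := by
    have h1 : (T : ℝ) - 2 ≤ ((n : ℝ) - 3) * γ / η := by linarith
    have h2 : ((T : ℝ) - 2) * η ≤ ((n : ℝ) - 3) * γ := by
      have := mul_le_mul_of_nonneg_right h1 hη0.le
      rwa [div_mul_cancel₀ _ hη0.ne'] at this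
    nlinarith
  have hmean' : ((T - 2 : ℕ) : ℝ) * η ≤ ((n - 3 : ℕ) : ℝ) := by
    rw [hmcast, hkcast]; exact hmean
  -- Chernoff bound on the pmf
  have hpmf := binomPMF_le_exp (T - 2) (n - 3) hkm hmpos η hη0 hη1 hmean'
  rw [hmcast, hkcast] at hpmf
  -- compare exponents
  have hexp_le : Real.exp (-2 * (((n : ℝ) - 3) - ((T : ℝ) - 2) * η) ^ 2 / ((T : ℝ) - 2))
      ≤ Real.exp (-2 * (η / γ - η) ^ 2 * ((n : ℝ) - 3)) := by
    apply Real.exp_le_exp.mpr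
    have hγη : η / γ - η = η * (1 - γ) / γ := by field_simp
    rw [hγη]
    set k : ℝ := (n : ℝ) - 3 with hk
    set m : ℝ := (T : ℝ) - 2 with hm
    have hmpos' : 0 < m := by rw [hm]; linarith
    have hmk : k ≤ m := by rw [hk, hm]; linarith
    have hmη : m * η ≤ k * γ := by
      rw [hk, hm]
      have h1 : (T : ℝ) - 2 ≤ ((n : ℝ) - 3) * γ / η := by linarith
      have := mul_le_mul_of_nonneg_right h1 hη0.le
      rwa [div_mul_cancel₀ _ hη0.ne'] at this
    clear_value k m
    have hkpos' : (0:ℝ) < k := by linarith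
    have hc : k * (1 - γ) ≤ k - m * η := by nlinarith [hmη]
    have hc0 : 0 ≤ k * (1 - γ) := by nlinarith
    have h5 : (k * (1 - γ)) ^ 2 ≤ (k - m * η) ^ 2 := by
      apply pow_le_pow_left₀ hc0 hc
    have h6 : k * (m * η) ≤ k * (k * γ) := mul_le_mul_of_nonneg_left hmη (by linarith)
    have key : η ^ 2 * (1 - γ) ^ 2 * k * m ≤ (k - m * η) ^ 2 * γ ^ 2 := by
      have e5 := mul_le_mul_of_nonneg_left h6 (by positivity : (0:ℝ) ≤ η * (1 - γ) ^ 2)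
      have e6 := mul_le_mul_of_nonneg_right hηγ
        (by positivity : (0:ℝ) ≤ (1 - γ) ^ 2 * k ^ 2 * γ)
      have e7 := mul_le_mul_of_nonneg_right h5 (sq_nonneg γ)
      linarith
    have key2 : (η * (1 - γ) / γ) ^ 2 * k * m ≤ (k - m * η) ^ 2 := by
      have hγ2 : (η * (1 - γ) / γ) ^ 2 = η ^ 2 * (1 - γ) ^ 2 / γ ^ 2 := by
        field_simp
      rw [hγ2, div_mul_eq_mul_div, div_mul_eq_mul_div, div_le_iff₀ (by positivity)]
      linarith
    rw [div_le_iff₀ hmpos']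
    linarith [key2]
  -- prefactor bound
  have hpre : η * ((T : ℝ) - (n : ℝ) + 2) ^ 2 ≤ ((n : ℝ) - 3) ^ 2 * γ ^ 2 / η := by
    have h1 : (T : ℝ) - (n : ℝ) + 2 ≤ ((n : ℝ) - 3) * γ / η := by
      have : (T : ℝ) ≤ 2 + ((n : ℝ) - 3) * γ / η := hT2
      linarith
    have h2 : (1 : ℝ) ≤ (T : ℝ) - (n : ℝ) + 2 := by linarith
    have h3 : ((T : ℝ) - (n : ℝ) + 2) ^ 2 ≤ (((n : ℝ) - 3) * γ / η) ^ 2 := by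
      apply pow_le_pow_left₀ (by linarith) h1
    have h4 : (((n : ℝ) - 3) * γ / η) ^ 2 = ((n : ℝ) - 3) ^ 2 * γ ^ 2 / η ^ 2 := by
      field_simp
    rw [h4] at h3
    have := mul_le_mul_of_nonneg_left h3 hη0.le
    calc η * ((T : ℝ) - (n : ℝ) + 2) ^ 2 ≤ η * (((n : ℝ) - 3) ^ 2 * γ ^ 2 / η ^ 2) := this
      _ = ((n : ℝ) - 3) ^ 2 * γ ^ 2 / η := by field_simp
  -- combine
  have hpmf2 : binomPMF (T - 2) (n - 3) η ≤ Real.exp (-2 * (η / γ - η) ^ 2 * ((n : ℝ) - 3)) :=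
    le_trans hpmf hexp_le
  have hpmf_nonneg : 0 ≤ binomPMF (T - 2) (n - 3) η := by
    unfold binomPMF
    apply mul_nonneg (mul_nonneg (Nat.cast_nonneg _) (pow_nonneg hη0.le _)) (pow_nonneg (by linarith) _)
  have hpre_nonneg : (0 : ℝ) ≤ ((n : ℝ) - 3) ^ 2 * γ ^ 2 / η := by positivity
  exact mul_le_mul hpre hpmf2 hpmf_nonneg hpre_nonneg
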